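/- Let A ∈ ℝ^{n×n} be symmetric with eigendecomposition A = Σ_j U^(j) Λ_j (U^(j))ᵀ where the blocks U^(j) correspond to groups of singular values, and let X ∈ ℝ^{n×r} have orthonormal columns. Writing X^(≤j) for the first r_j columns of X and U^(≤j) = [U^(1)|...|U^(j)], if σ_{r_{j−1}+1} ≤ e·σ_{r_j} for all j ≤ t, then ‖Π_{X_⊥} M^(≤t)‖ ≤ Σ_{j=1}^t e·σ_{r_j}·sin θ(X^(≤j), U^(≤j)), where M^(≤t) = Σ_{j≤t} U^(j)Λ_j(U^(j))ᵀ, Π_{X_⊥} = I − XXᵀ, and sin θ(X^(≤j),U^(≤j)) = ‖(I − X^(≤j)(X^(≤j))ᵀ)U^(≤j)‖. -/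

import Mathlib

open Matrix

/-- The spectral (operator) norm of a real matrix, via its action on Euclidean space. -/
noncomputable def opNorm {m n : ℕ} (A : Matrix (Fin m) (Fin n) ℝ) : ℝ :=
  ‖LinearMap.toContinuousLinearMap (Matrix.toEuclideanLin A)‖

/-- The Frobenius norm of a real matrix. -/
noncomputable def frobNorm {m n : ℕ} (A : Matrix (Fin m) (Fin n) ℝ) : ℝ :=
  Real.sqrt (∑ i, ∑ j, (A i j) ^ 2)

namespace Stmt10Aux

noncomputable def ev {k : ℕ} (v : Fin k → ℝ) : EuclideanSpace ℝ (Fin k) :=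
  (WithLp.equiv 2 (Fin k → ℝ)).symm v

lemma ev_inner {k : ℕ} (v w : Fin k → ℝ) : (inner ℝ (ev v) (ev w) : ℝ) = v ⬝ᵥ w := by
  simpa [ev] using (EuclideanSpace.inner_toLp_toLp (𝕜 := ℝ) v w).trans (dotProduct_comm _ _)

lemma ev_norm_sq {k : ℕ} (v : Fin k → ℝ) : ‖ev v‖ ^ 2 = v ⬝ᵥ v := by
  rw [← real_inner_self_eq_norm_sq, ev_inner]

lemma toEuclideanLin_ev {m k : ℕ} (A : Matrix (Fin m) (Fin k) ℝ) (v : Fin k → ℝ) :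
    Matrix.toEuclideanLin A (ev v) = ev (A *ᵥ v) :=
  Matrix.toEuclideanLin_apply_piLp_toLp A v

lemma le_opNorm {m k : ℕ} (A : Matrix (Fin m) (Fin k) ℝ) (v : Fin k → ℝ) :
    ‖ev (A *ᵥ v)‖ ≤ opNorm A * ‖ev v‖ := by
  rw [← toEuclideanLin_ev]
  simpa [opNorm] using (LinearMap.toContinuousLinearMap (Matrix.toEuclideanLin A)).le_opNorm (ev v)

lemma opNorm_le {m k : ℕ} {A : Matrix (Fin m) (Fin k) ℝ} {c : ℝ} (hc : 0 ≤ c)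
    (h : ∀ v : Fin k → ℝ, ‖ev (A *ᵥ v)‖ ≤ c * ‖ev v‖) : opNorm A ≤ c := by
  apply ContinuousLinearMap.opNorm_le_bound _ hc
  intro x
  have hx : ev ((WithLp.equiv 2 (Fin k → ℝ)) x) = x := (WithLp.equiv 2 _).symm_apply_apply x
  have := h ((WithLp.equiv 2 (Fin k → ℝ)) x)
  rw [hx] at this
  rw [← toEuclideanLin_ev, hx] at this
  simpa using this

lemma opNorm_nonneg {m k : ℕ} (A : Matrix (Fin m) (Fin k) ℝ) : 0 ≤ opNorm A :=
  norm_nonneg _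

lemma opNorm_mul_le {m k l : ℕ} (A : Matrix (Fin m) (Fin k) ℝ) (B : Matrix (Fin k) (Fin l) ℝ) :
    opNorm (A * B) ≤ opNorm A * opNorm B := by
  apply opNorm_le (mul_nonneg (opNorm_nonneg A) (opNorm_nonneg B))
  intro v
  rw [← Matrix.mulVec_mulVec]
  calc ‖ev (A *ᵥ (B *ᵥ v))‖ ≤ opNorm A * ‖ev (B *ᵥ v)‖ := le_opNorm A _
    _ ≤ opNorm A * (opNorm B * ‖ev v‖) := by
        exact mul_le_mul_of_nonneg_left (le_opNorm B v) (opNorm_nonneg A)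
    _ = opNorm A * opNorm B * ‖ev v‖ := by ring

lemma opNorm_sum_le {m k : ℕ} {ι : Type*} (s : Finset ι) (M : ι → Matrix (Fin m) (Fin k) ℝ) :
    opNorm (∑ j ∈ s, M j) ≤ ∑ j ∈ s, opNorm (M j) := by
  unfold opNorm
  rw [map_sum, map_sum]
  exact norm_sum_le _ _

lemma dp_shift {m k : ℕ} (A : Matrix (Fin m) (Fin k) ℝ) (v : Fin k → ℝ) (w : Fin m → ℝ) :
    (A *ᵥ v) ⬝ᵥ w = v ⬝ᵥ (Aᵀ *ᵥ w) := by
  rw [Matrix.mulVec_transpose, dotProduct_comm v, ← Matrix.dotProduct_mulVec,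
    dotProduct_comm]

lemma isometry_norm {m k : ℕ} {A : Matrix (Fin m) (Fin k) ℝ} (h : Aᵀ * A = 1)
    (v : Fin k → ℝ) : ‖ev (A *ᵥ v)‖ = ‖ev v‖ := by
  have hsq : ‖ev (A *ᵥ v)‖ ^ 2 = ‖ev v‖ ^ 2 := by
    rw [ev_norm_sq, ev_norm_sq, dp_shift, Matrix.mulVec_mulVec, h, Matrix.one_mulVec]
  have h1 := norm_nonneg (ev (A *ᵥ v))
  have h2 := norm_nonneg (ev v)
  nlinarith

lemma opNorm_le_one_of_orth {m k : ℕ} {A : Matrix (Fin m) (Fin k) ℝ} (h : Aᵀ * A = 1) :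
    opNorm A ≤ 1 := by
  apply opNorm_le zero_le_one
  intro v
  rw [isometry_norm h v, one_mul]

lemma opNorm_transpose_le_one_of_orth {m k : ℕ} {A : Matrix (Fin m) (Fin k) ℝ}
    (h : Aᵀ * A = 1) : opNorm Aᵀ ≤ 1 := by
  apply opNorm_le zero_le_one
  intro v
  have key : ‖ev (Aᵀ *ᵥ v)‖ ^ 2 ≤ ‖ev v‖ * ‖ev (Aᵀ *ᵥ v)‖ := by
    rw [ev_norm_sq]
    have h1 : (Aᵀ *ᵥ v) ⬝ᵥ (Aᵀ *ᵥ v) = v ⬝ᵥ (A *ᵥ (Aᵀ *ᵥ v)) := by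
      rw [dp_shift, Matrix.transpose_transpose]
    rw [h1, ← ev_inner]
    calc (inner ℝ (ev v) (ev (A *ᵥ (Aᵀ *ᵥ v))) : ℝ) ≤ ‖ev v‖ * ‖ev (A *ᵥ (Aᵀ *ᵥ v))‖ :=
          real_inner_le_norm _ _
      _ = ‖ev v‖ * ‖ev (Aᵀ *ᵥ v)‖ := by rw [isometry_norm h]
  have h1 := norm_nonneg (ev (Aᵀ *ᵥ v))
  have h2 := norm_nonneg (ev v)
  nlinarith

lemma opNorm_proj_le_one {m : ℕ} {P : Matrix (Fin m) (Fin m) ℝ} (hsym : Pᵀ = P)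
    (hidem : P * P = P) : opNorm P ≤ 1 := by
  apply opNorm_le zero_le_one
  intro v
  have key : ‖ev (P *ᵥ v)‖ ^ 2 ≤ ‖ev v‖ * ‖ev (P *ᵥ v)‖ := by
    rw [ev_norm_sq]
    have h1 : (P *ᵥ v) ⬝ᵥ (P *ᵥ v) = v ⬝ᵥ (P *ᵥ (P *ᵥ v)) := by
      rw [dp_shift, hsym]
    rw [h1, Matrix.mulVec_mulVec, hidem, ← ev_inner]
    exact real_inner_le_norm _ _
  have h1 := norm_nonneg (ev (P *ᵥ v))
  have h2 := norm_nonneg (ev v)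
  nlinarith

lemma opNorm_diagonal_le {k : ℕ} {d : Fin k → ℝ} {c : ℝ} (hc : 0 ≤ c)
    (h : ∀ i, |d i| ≤ c) : opNorm (Matrix.diagonal d) ≤ c := by
  apply opNorm_le hc
  intro v
  have hsq : ‖ev (Matrix.diagonal d *ᵥ v)‖ ^ 2 ≤ (c * ‖ev v‖) ^ 2 := by
    rw [ev_norm_sq, mul_pow, ev_norm_sq]
    simp only [dotProduct, Matrix.mulVec_diagonal, Finset.mul_sum]
    apply Finset.sum_le_sum
    intro i _
    obtain ⟨hl, hr⟩ := abs_le.mp (h i)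
    have hdc : d i ^ 2 ≤ c ^ 2 := by nlinarith
    nlinarith [mul_nonneg (sub_nonneg.mpr hdc) (sq_nonneg (v i))]
  have h1 := norm_nonneg (ev (Matrix.diagonal d *ᵥ v))
  have h2 := mul_nonneg hc (norm_nonneg (ev v))
  nlinarith

lemma sum_fin_castLE {N M : ℕ} (h : M ≤ N) (f : Fin N → ℝ)
    (hf : ∀ a : Fin N, ¬((a : ℕ) < M) → f a = 0) :
    ∑ a, f a = ∑ b : Fin M, f (Fin.castLE h b) := by
  classical
  have key : ∑ a : Fin N, f a = ∑ a ∈ Finset.univ.map (Fin.castLEEmb h), f a := by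
    symm
    apply Finset.sum_subset (Finset.subset_univ _)
    intro a _ ha
    apply hf
    intro halt
    exact ha (Finset.mem_map.mpr ⟨⟨(a : ℕ), halt⟩, Finset.mem_univ _, by ext; simp⟩)
  rw [key, Finset.sum_map]
  rfl

end Stmt10Aux

namespace Stmt10Aux

lemma mul_submatrix_col {p q N M : ℕ} (A : Matrix (Fin p) (Fin q) ℝ)
    (B : Matrix (Fin q) (Fin N) ℝ) (e : Fin M → Fin N) :
    A * (B.submatrix id e) = (A * B).submatrix id e := by
  ext i b
  simp [Matrix.mul_apply]

lemma mul_one_submatrix {p N M : ℕ} (A : Matrix (Fin p) (Fin N) ℝ) (e : Fin M → Fin N) :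
    A * ((1 : Matrix (Fin N) (Fin N) ℝ).submatrix id e) = A.submatrix id e := by
  ext i b
  simp [Matrix.mul_apply, Matrix.one_apply, mul_ite, Finset.sum_ite_eq']

end Stmt10Aux


open Stmt10Aux in
/-- for a symmetric `M^(≤t) = U·diag(λ)·Uᵀ` whose spectrum is split into
blocks by indices `0 = r 0 < r 1 < … < r t`, with nonincreasing nonnegative `λ` and
`σ_{r_{j−1}+1} ≤ e·σ_{r_j}` for every block, and `X` with orthonormal columns,
`‖Π_{X⊥} M^(≤t)‖ ≤ Σ_j e·σ_{r_j}·sin θ(X^(≤j), U^(≤j))`, where `X^(≤j)`, `U^(≤j)`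
consist of the first `r j` columns and `sin θ(X^(≤j),U^(≤j)) = ‖(I − X^(≤j)(X^(≤j))ᵀ)U^(≤j)‖`. -/
theorem stmt10 {n t : ℕ} (r : ℕ → ℕ) (hr0 : r 0 = 0)
    (hrmono : ∀ j : ℕ, j < t → r j < r (j + 1))
    (h1 : ∀ j : Fin t, r (j : ℕ) < r t)
    (h2 : ∀ j : Fin t, r ((j : ℕ) + 1) - 1 < r t)
    (hle : ∀ j : Fin t, r ((j : ℕ) + 1) ≤ r t)
    (Ufull X : Matrix (Fin n) (Fin (r t)) ℝ)
    (hU : Ufullᵀ * Ufull = 1) (hX : Xᵀ * X = 1)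
    (lam : Fin (r t) → ℝ) (hnn : ∀ i, 0 ≤ lam i) (hanti : Antitone lam)
    (hgap : ∀ j : Fin t,
      lam ⟨r (j : ℕ), h1 j⟩ ≤ Real.exp 1 * lam ⟨r ((j : ℕ) + 1) - 1, h2 j⟩) :
    opNorm ((1 - X * Xᵀ) * (Ufull * Matrix.diagonal lam * Ufullᵀ)) ≤
      ∑ j : Fin t, Real.exp 1 * lam ⟨r ((j : ℕ) + 1) - 1, h2 j⟩ *
        opNorm ((1 - X.submatrix id (Fin.castLE (hle j)) *
            (X.submatrix id (Fin.castLE (hle j)))ᵀ) *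
          Ufull.submatrix id (Fin.castLE (hle j))) := by
  classical
  -- monotonicity of r on [0, t]
  have hmono : ∀ a b : ℕ, a ≤ b → b ≤ t → r a ≤ r b := by
    intro a b hab hbt
    induction b with
    | zero =>
      have : a = 0 := by omega
      subst this
      exact le_rfl
    | succ b ih =>
      rcases Nat.lt_or_ge a (b + 1) with h | h
      · have h3 := ih (by omega) (by omega)
        have h4 := hrmono b (by omega)
        omega
      · have : a = b + 1 := by omega
        subst this
        exact le_rfl
  -- block diagonal pieces
  set d : Fin t → Fin (r t) → ℝ :=
    fun j i => if r (j : ℕ) ≤ (i : ℕ) ∧ (i : ℕ) < r ((j : ℕ) + 1) then lam i else 0 with hd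
  have hsum : ∀ i : Fin (r t), ∑ j : Fin t, d j i = lam i := by
    intro i
    have hex : ∃ k, (i : ℕ) < r k := ⟨t, i.isLt⟩
    have hk : (i : ℕ) < r (Nat.find hex) := Nat.find_spec hex
    have hkle : Nat.find hex ≤ t := Nat.find_min' hex i.isLt
    have hk0 : Nat.find hex ≠ 0 := by
      intro h; rw [h, hr0] at hk; omega
    set j0 : ℕ := Nat.find hex - 1 with hj0
    have hj0succ : j0 + 1 = Nat.find hex := by omega
    have hj0lt : j0 < t := by omega
    have hrj0 : r j0 ≤ (i : ℕ) := by
      by_contra h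
      push_neg at h
      exact Nat.find_min hex (by omega) h
    rw [Finset.sum_eq_single (⟨j0, hj0lt⟩ : Fin t)]
    · simp only [hd]
      rw [if_pos ⟨hrj0, by rw [hj0succ]; exact hk⟩]
    · intro j _ hne
      have hjne : (j : ℕ) ≠ j0 := fun h => hne (Fin.ext h)
      simp only [hd]
      rw [if_neg]
      rintro ⟨hrle, hlt⟩
      rcases lt_or_gt_of_ne hjne with h | h
      · have : r ((j : ℕ) + 1) ≤ r j0 := hmono _ _ (by omega) (by omega)
        omega
      · have : r (Nat.find hex) ≤ r (j : ℕ) := hmono _ _ (by omega) (by omega)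
        omega
    · intro h
      exact absurd (Finset.mem_univ _) h
  have hdiag : Matrix.diagonal lam = ∑ j : Fin t, Matrix.diagonal (d j) := by
    ext a b
    by_cases hab : a = b
    · subst hab
      simp [Matrix.sum_apply, Matrix.diagonal_apply_eq, hsum a]
    · simp [Matrix.sum_apply, Matrix.diagonal_apply_ne _ hab]
  have hdecomp : (1 - X * Xᵀ) * (Ufull * Matrix.diagonal lam * Ufullᵀ)
      = ∑ j : Fin t, (1 - X * Xᵀ) * (Ufull * Matrix.diagonal (d j) * Ufullᵀ) := by
    rw [hdiag]
    rw [Matrix.mul_sum, Matrix.sum_mul, Matrix.mul_sum]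
  rw [hdecomp]
  refine le_trans (opNorm_sum_le Finset.univ _) (Finset.sum_le_sum ?_)
  intro j _
  set cj : Fin (r ((j : ℕ) + 1)) → Fin (r t) := Fin.castLE (hle j) with hcj
  set Xj := X.submatrix id cj with hXj
  set Uj := Ufull.submatrix id cj with hUj
  set D' := Matrix.diagonal (fun b : Fin (r ((j : ℕ) + 1)) => d j (cj b)) with hD'
  -- identity (a): restrict U to the first r (j+1) columns
  have ha : Ufull * Matrix.diagonal (d j) * Ufullᵀ = Uj * D' * Ujᵀ := by
    ext i k
    have lhs : (Ufull * Matrix.diagonal (d j) * Ufullᵀ) i k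
        = ∑ a : Fin (r t), Ufull i a * d j a * Ufull k a := by
      simp [Matrix.mul_apply, Matrix.diagonal_apply, Matrix.transpose_apply, mul_ite, mul_zero,
        ite_mul, zero_mul, Finset.sum_ite_eq, Finset.sum_ite_eq']
    have rhs : (Uj * D' * Ujᵀ) i k
        = ∑ b : Fin (r ((j : ℕ) + 1)), Ufull i (cj b) * d j (cj b) * Ufull k (cj b) := by
      simp [Matrix.mul_apply, Matrix.diagonal_apply, Matrix.transpose_apply, hUj, hD', mul_ite,
        mul_zero, ite_mul, zero_mul, Finset.sum_ite_eq, Finset.sum_ite_eq']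
    rw [lhs, rhs]
    apply sum_fin_castLE (hle j)
    intro a hna
    have : d j a = 0 := by
      simp only [hd]
      rw [if_neg]
      rintro ⟨_, hlt⟩
      exact hna hlt
    rw [this]
    ring
  -- identity (b): the big projection absorbs the small one
  have hXXj : X * Xᵀ * Xj = Xj := by
    have hcol : Xᵀ * Xj = (1 : Matrix (Fin (r t)) (Fin (r t)) ℝ).submatrix id cj := by
      rw [hXj, mul_submatrix_col, hX]
    rw [Matrix.mul_assoc, hcol, mul_one_submatrix]
  have hPPj : (1 - X * Xᵀ) * (1 - Xj * Xjᵀ) = 1 - X * Xᵀ := by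
    have h2' : X * Xᵀ * (Xj * Xjᵀ) = Xj * Xjᵀ := by
      rw [← Matrix.mul_assoc, hXXj]
    have expand : (1 - X * Xᵀ) * (1 - Xj * Xjᵀ)
        = 1 - Xj * Xjᵀ - X * Xᵀ + X * Xᵀ * (Xj * Xjᵀ) := by
      noncomm_ring
    rw [expand, h2']
    abel
  -- identity (c): Uj has orthonormal columns
  have hUjorth : Ujᵀ * Uj = 1 := by
    ext a b
    have h := congrFun (congrFun hU (cj a)) (cj b)
    simp only [Matrix.mul_apply, Matrix.transpose_apply] at h ⊢
    simp only [hUj, Matrix.submatrix_apply, id_eq]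
    rw [h, Matrix.one_apply, Matrix.one_apply]
    have : cj a = cj b ↔ a = b := by
      simp [hcj, Fin.castLE_inj]
    simp [this]
  -- projection bounds
  have hQ : (X * Xᵀ) * (X * Xᵀ) = X * Xᵀ := by
    rw [Matrix.mul_assoc X Xᵀ (X * Xᵀ), ← Matrix.mul_assoc Xᵀ X Xᵀ, hX, Matrix.one_mul]
  have hPsym : (1 - X * Xᵀ)ᵀ = 1 - X * Xᵀ := by
    simp [Matrix.transpose_sub, Matrix.transpose_mul]
  have hPidem : (1 - X * Xᵀ) * (1 - X * Xᵀ) = 1 - X * Xᵀ := by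
    have expand : (1 - X * Xᵀ) * (1 - X * Xᵀ)
        = 1 - X * Xᵀ - X * Xᵀ + (X * Xᵀ) * (X * Xᵀ) := by
      noncomm_ring
    rw [expand, hQ]
    abel
  have hPnorm : opNorm (1 - X * Xᵀ) ≤ 1 := opNorm_proj_le_one hPsym hPidem
  -- diagonal bound
  set c : ℝ := lam ⟨r (j : ℕ), h1 j⟩ with hc
  have hc0 : 0 ≤ c := hnn _
  have hDnorm : opNorm D' ≤ c := by
    apply opNorm_diagonal_le hc0
    intro b
    simp only [hd]
    split
    · rename_i hcond
      rw [abs_of_nonneg (hnn _)]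
      exact hanti (show (⟨r (j : ℕ), h1 j⟩ : Fin (r t)) ≤ cj b from hcond.1)
    · simpa using hc0
  have hUjTnorm : opNorm Ujᵀ ≤ 1 := opNorm_transpose_le_one_of_orth hUjorth
  -- put it together
  have key : (1 - X * Xᵀ) * (Ufull * Matrix.diagonal (d j) * Ufullᵀ)
      = (1 - X * Xᵀ) * ((1 - Xj * Xjᵀ) * Uj * (D' * Ujᵀ)) := by
    rw [ha]
    conv_lhs => rw [← hPPj]
    simp only [Matrix.mul_assoc]
  rw [key]
  set s : ℝ := opNorm ((1 - Xj * Xjᵀ) * Uj) with hs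
  have hs0 : 0 ≤ s := opNorm_nonneg _
  have hbig : opNorm ((1 - X * Xᵀ) * ((1 - Xj * Xjᵀ) * Uj * (D' * Ujᵀ))) ≤ 1 * (s * (c * 1)) := by
    refine le_trans (opNorm_mul_le _ _) ?_
    refine mul_le_mul hPnorm ?_ (opNorm_nonneg _) zero_le_one
    refine le_trans (opNorm_mul_le _ _) ?_
    refine mul_le_mul le_rfl ?_ (opNorm_nonneg _) hs0
    refine le_trans (opNorm_mul_le _ _) ?_
    exact mul_le_mul hDnorm hUjTnorm (opNorm_nonneg _) hc0
  have hgapj := hgap j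
  have : c * s ≤ Real.exp 1 * lam ⟨r ((j : ℕ) + 1) - 1, h2 j⟩ * s :=
    mul_le_mul_of_nonneg_right hgapj hs0
  linarith [hbig]
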